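/- Let 0 < L < γ and λ ∈ (0,1). Set r = √((γ/L)² − 1) and ψ₀ = arctan( (γ/λ + L) / (L·r) ). Define φ(t) = −L/γ + (L·r/γ)·tan(ψ₀ − L·r·t). Then φ(0) = 1/λ, and for every t such that ψ₀ − L·r·t ∈ (−π/2, π/2), φ has derivative −2Lφ(t) − γ(φ(t)² + 1) at t; i.e., φ is an explicit solution of the Riccati equation φ' = −2Lφ − γ(φ² + 1) with initial condition 1/λ in the case γ > L. -/

import Mathlib

open Real

/-- In the case `γ > L`, with `r = √((γ/L)² - 1)` and
`ψ₀ = arctan((γ/λ + L)/(L·r))`, the function `φ t = -L/γ + (L·r/γ)·tan(ψ₀ - L·r·t)`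
satisfies `φ 0 = 1/λ` and solves `φ' = -2Lφ - γ(φ² + 1)` at every `t` with
`ψ₀ - L·r·t ∈ (-π/2, π/2)`. -/
theorem riccati_explicit_solution_gt_case
    (L γ lam : ℝ) (hL : 0 < L) (hLγ : L < γ) (hlam : lam ∈ Set.Ioo (0 : ℝ) 1)
    (r ψ₀ : ℝ)
    (hr : r = Real.sqrt ((γ / L) ^ 2 - 1))
    (hψ₀ : ψ₀ = Real.arctan ((γ / lam + L) / (L * r)))
    (φ : ℝ → ℝ)
    (hφ : ∀ t : ℝ, φ t = -L / γ + (L * r / γ) * Real.tan (ψ₀ - L * r * t)) :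
    φ 0 = 1 / lam ∧
      ∀ t : ℝ, ψ₀ - L * r * t ∈ Set.Ioo (-(π / 2)) (π / 2) →
        HasDerivAt φ (-2 * L * φ t - γ * ((φ t) ^ 2 + 1)) t := by
  have hLne : L ≠ 0 := hL.ne'
  have hγ : (0:ℝ) < γ := hL.trans hLγ
  have hγne : γ ≠ 0 := hγ.ne'
  have hratio : (1:ℝ) < γ / L := (one_lt_div hL).2 hLγ
  have hnn : (0:ℝ) ≤ (γ / L) ^ 2 - 1 := by nlinarith
  have hr2 : r ^ 2 = (γ / L) ^ 2 - 1 := by rw [hr, Real.sq_sqrt hnn]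
  have hrpos : 0 < r := by
    rw [hr]; apply Real.sqrt_pos.2; nlinarith
  have hLr2 : (L * r) ^ 2 = γ ^ 2 - L ^ 2 := by
    have : L ^ 2 * ((γ / L) ^ 2 - 1) = γ ^ 2 - L ^ 2 := by field_simp
    nlinarith [hr2]
  have hlam0 := hlam.1
  constructor
  · rw [hφ 0]
    have : ψ₀ - L * r * 0 = ψ₀ := by ring
    rw [this, hψ₀, Real.tan_arctan]
    have hLr : L * r ≠ 0 := by positivity
    field_simp
    ring
  · intro t ht
    set u := ψ₀ - L * r * t with hu
    have hcos : Real.cos u ≠ 0 := (Real.cos_pos_of_mem_Ioo ht).ne'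
    have h1 : HasDerivAt (fun s : ℝ => ψ₀ - L * r * s) (-(L * r)) t := by
      exact (((hasDerivAt_id t).const_mul (L * r)).const_sub ψ₀).congr_deriv (by ring)
    have h2 : HasDerivAt Real.tan (1 / Real.cos u ^ 2) u := Real.hasDerivAt_tan hcos
    have h3 : HasDerivAt (fun s : ℝ => -L / γ + (L * r / γ) * Real.tan (ψ₀ - L * r * s))
        (0 + (L * r / γ) * (1 / Real.cos u ^ 2 * -(L * r))) t :=
      (hasDerivAt_const t (-L / γ)).add ((h2.comp t h1).const_mul (L * r / γ))
    have hφeq : φ = fun s : ℝ => -L / γ + (L * r / γ) * Real.tan (ψ₀ - L * r * s) :=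
      funext hφ
    have h4 : HasDerivAt φ (0 + (L * r / γ) * (1 / Real.cos u ^ 2 * -(L * r))) t :=
      hφeq ▸ h3
    convert h4 using 1
    have htan : Real.tan u ^ 2 + 1 = 1 / Real.cos u ^ 2 := by
      rw [Real.tan_eq_sin_div_cos]
      field_simp
      exact Real.sin_sq_add_cos_sq u
    
    rw [hφ t, ← hu, ← htan]
    field_simp
    ring_nf
    linear_combination hLr2
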